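/- Let K be a type of keys with decidable equality and V a type of values, let S be a schedule of length m, and let P be a strict partial order on positions {0,…,m−1} such that any two positions whose operations access the same key, at least one of them being a write, are P-comparable. Let L₁ and L₂ be two linear orders on the positions extending P, and let S₁ and S₂ be the schedules obtained by arranging the operations of S according to L₁ and L₂ respectively. Then for every initial store s₀, each read operation returns the same value in the execution of S₁ as in the execution of S₂, and the final stores after executing S₁ and S₂ from s₀ are equal. -/

import Mathlib

/-- An operation over keys `K` and values `V`: `write k v` or `read k`. -/
inductive Op (K : Type*) (V : Type*) where
  | write (k : K) (v : V)
  | read (k : K)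

variable {K V : Type*} [DecidableEq K]

/-- The key accessed by an operation. -/
def Op.key : Op K V → K
  | Op.write k _ => k
  | Op.read k => k

/-- Whether an operation is a write. -/
def Op.isWrite : Op K V → Prop
  | Op.write _ _ => True
  | Op.read _ => False

/-- One execution step: a write updates the store, a read leaves it unchanged. -/
def step (s : K → V) : Op K V → K → V
  | Op.write k v => Function.update s k v
  | Op.read _ => s

/-- The store obtained by executing a schedule left to right from `s₀`. -/
def execStore (s₀ : K → V) (S : List (Op K V)) : K → V := S.foldl step s₀

/-- Boolean test: is `op` a write to key `k`? -/
def wk (k : K) : Op K V → Bool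
  | Op.write k' _ => decide (k' = k)
  | Op.read _ => false

lemma execStore_congr_of_writes (k : K) :
    ∀ (L : List (Op K V)), (∀ op ∈ L, wk k op = true) →
      ∀ s s' : K → V, s k = s' k → execStore s L k = execStore s' L k := by
  intro L
  induction L with
  | nil => intro _ s s' h; exact h
  | cons op L ih =>
    intro hall s s' h
    have hop : wk k op = true := hall op (by simp)
    cases op with
    | read k' => simp [wk] at hop
    | write k' v =>
      have : execStore s (Op.write k' v :: L) = execStore (step s (Op.write k' v)) L := rfl
      show execStore (step s (Op.write k' v)) L k = execStore (step s' (Op.write k' v)) L k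
      have hk : k' = k := by simpa [wk] using hop
      subst hk
      exact ih (fun o ho => hall o (List.mem_cons_of_mem _ ho)) _ _ (by simp [step])

lemma execStore_filter (k : K) :
    ∀ (L : List (Op K V)) (s : K → V),
      execStore s L k = execStore s (L.filter (wk k)) k := by
  intro L
  induction L with
  | nil => intro s; rfl
  | cons op L ih =>
    intro s
    by_cases h : wk k op = true
    · rw [List.filter_cons_of_pos h]
      show execStore (step s op) L k = execStore (step s op) (L.filter (wk k)) k
      exact ih _
    · rw [List.filter_cons_of_neg h]
      show execStore (step s op) L k = execStore s (L.filter (wk k)) k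
      rw [ih]
      refine execStore_congr_of_writes k _ (fun o ho => List.of_mem_filter ho) _ _ ?_
      cases op with
      | read _ => rfl
      | write k' v =>
        have : k' ≠ k := by simpa [wk] using h
        simp [step, Function.update_of_ne (Ne.symm this)]

lemma mem_take_ofFn {m : ℕ} (σ : Equiv.Perm (Fin m)) (n : ℕ) (j : Fin m) :
    j ∈ (List.ofFn σ).take n ↔ (σ.symm j : ℕ) < n := by
  constructor
  · rintro hmem
    rcases List.mem_iff_getElem.mp hmem with ⟨t, ht, hval⟩
    rw [List.getElem_take] at hval
    have htm : t < m := by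
      have := ht; simp [List.length_take, List.length_ofFn] at this; omega
    have : σ ⟨t, htm⟩ = j := by simpa using hval
    have : σ.symm j = ⟨t, htm⟩ := by rw [← this]; simp
    have hlt : t < n := by
      have := ht; simp [List.length_take, List.length_ofFn] at this; omega
    simp [this, hlt]
  · intro hlt
    refine List.mem_iff_getElem.mpr ⟨(σ.symm j : ℕ), ?_, ?_⟩
    · simp [List.length_take, List.length_ofFn, hlt, (σ.symm j).isLt]
    · rw [List.getElem_take]
      simp

lemma key_lists_eq {m : ℕ} (P : Fin m → Fin m → Prop)
    (hirr : ∀ i, ¬ P i i) (htrans : ∀ i j l, P i j → P j l → P i l)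
    (σ₁ σ₂ : Equiv.Perm (Fin m))
    (hσ₁ : ∀ i j : Fin m, P i j → σ₁.symm i < σ₁.symm j)
    (hσ₂ : ∀ i j : Fin m, P i j → σ₂.symm i < σ₂.symm j)
    (q : Fin m → Bool)
    (hcomp : ∀ i j : Fin m, i ≠ j → q i = true → q j = true → P i j ∨ P j i)
    (n₁ n₂ : ℕ)
    (hn : ∀ j : Fin m, q j = true → ((σ₁.symm j : ℕ) < n₁ ↔ (σ₂.symm j : ℕ) < n₂)) :
    ((List.ofFn σ₁).take n₁).filter q = ((List.ofFn σ₂).take n₂).filter q := by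
  have hanti : IsAntisymm (Fin m) P :=
    ⟨fun a b hab hba => absurd (htrans a b a hab hba) (hirr a)⟩
  have sorted : ∀ (σ : Equiv.Perm (Fin m)),
      (∀ i j : Fin m, P i j → σ.symm i < σ.symm j) → ∀ n : ℕ,
      List.Pairwise P (((List.ofFn σ).take n).filter q) := by
    intro σ hσ n
    have hpw : (List.ofFn σ).Pairwise (fun a b => a ≠ b ∧ ¬ P b a) := by
      refine List.pairwise_ofFn.mpr ?_
      intro t t' htt
      refine ⟨fun h => absurd (σ.injective h) (Fin.ne_of_lt htt), fun hP => ?_⟩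
      have := hσ _ _ hP
      simp at this
      omega
    have hpw2 : (((List.ofFn σ).take n).filter q).Pairwise (fun a b => a ≠ b ∧ ¬ P b a) :=
      hpw.sublist (List.filter_sublist.trans (List.take_sublist n _))
    refine hpw2.imp_of_mem ?_
    intro a b ha hb hab
    rcases hcomp a b hab.1 (List.of_mem_filter ha) (List.of_mem_filter hb) with h | h
    · exact h
    · exact absurd h hab.2
  have nodup : ∀ (σ : Equiv.Perm (Fin m)) (n : ℕ),
      (((List.ofFn σ).take n).filter q).Nodup := fun σ n =>
    (List.nodup_ofFn.mpr σ.injective).sublist (List.filter_sublist.trans (List.take_sublist n _))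
  have hperm : (((List.ofFn σ₁).take n₁).filter q).Perm (((List.ofFn σ₂).take n₂).filter q) := by
    refine (List.perm_ext_iff_of_nodup (nodup σ₁ n₁) (nodup σ₂ n₂)).mpr ?_
    intro j
    simp only [List.mem_filter, mem_take_ofFn]
    constructor
    · rintro ⟨h1, h2⟩; exact ⟨(hn j h2).mp h1, h2⟩
    · rintro ⟨h1, h2⟩; exact ⟨(hn j h2).mpr h1, h2⟩
  exact hperm.eq_of_pairwise (fun a b _ _ hab hba => absurd (htrans a b a hab hba) (hirr a)) (sorted σ₁ hσ₁ n₁) (sorted σ₂ hσ₂ n₂)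

lemma wk_iff (k : K) (op : Op K V) : wk k op = true ↔ op.key = k ∧ op.isWrite := by
  cases op <;> simp [wk, Op.key, Op.isWrite]

/-- Safety of serialization (Theorem 7.1 + serializability): if a strict
partial order `P` on the positions of a schedule `S` orders every pair of
conflicting operations (same key, at least one write), then executing `S`
arranged according to any two linear extensions of `P` (given by permutations
`σ₁`, `σ₂` placing the operation of original position `σ t` at position `t`)
yields the same value for every read and the same final store. -/
theorem safety_of_linear_extensions {m : ℕ} (S : Fin m → Op K V)
    (P : Fin m → Fin m → Prop)
    (hirr : ∀ i, ¬ P i i)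
    (htrans : ∀ i j l, P i j → P j l → P i l)
    (hconf : ∀ i j : Fin m, i ≠ j → (S i).key = (S j).key →
      ((S i).isWrite ∨ (S j).isWrite) → P i j ∨ P j i)
    (σ₁ σ₂ : Equiv.Perm (Fin m))
    (hσ₁ : ∀ i j : Fin m, P i j → σ₁.symm i < σ₁.symm j)
    (hσ₂ : ∀ i j : Fin m, P i j → σ₂.symm i < σ₂.symm j)
    (s₀ : K → V) :
    (∀ (i : Fin m) (k : K), S i = Op.read k →
      execStore s₀ ((List.ofFn (S ∘ σ₁)).take ((σ₁.symm i : Fin m) : ℕ)) k =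
        execStore s₀ ((List.ofFn (S ∘ σ₂)).take ((σ₂.symm i : Fin m) : ℕ)) k) ∧
    execStore s₀ (List.ofFn (S ∘ σ₁)) = execStore s₀ (List.ofFn (S ∘ σ₂)) := by
  have main : ∀ (k : K) (n₁ n₂ : ℕ),
      (∀ j : Fin m, wk k (S j) = true → ((σ₁.symm j : ℕ) < n₁ ↔ (σ₂.symm j : ℕ) < n₂)) →
      execStore s₀ ((List.ofFn (S ∘ σ₁)).take n₁) k =
        execStore s₀ ((List.ofFn (S ∘ σ₂)).take n₂) k := by
    intro k n₁ n₂ hn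
    rw [execStore_filter k ((List.ofFn (S ∘ σ₁)).take n₁) s₀,
        execStore_filter k ((List.ofFn (S ∘ σ₂)).take n₂) s₀]
    have hrw : ∀ σ : Equiv.Perm (Fin m), ∀ n : ℕ,
        ((List.ofFn (S ∘ σ)).take n).filter (wk k) =
          (((List.ofFn σ).take n).filter (fun j => wk k (S j))).map S := by
      intro σ n
      rw [← List.map_ofFn, ← List.map_take, List.filter_map]
      rfl
    rw [hrw σ₁, hrw σ₂]
    have := key_lists_eq P hirr htrans σ₁ σ₂ hσ₁ hσ₂ (fun j => wk k (S j))
      (fun i j hij hi hj => by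
        obtain ⟨hki, hwi⟩ := (wk_iff k (S i)).mp hi
        obtain ⟨hkj, _⟩ := (wk_iff k (S j)).mp hj
        exact hconf i j hij (hki.trans hkj.symm) (Or.inl hwi))
      n₁ n₂ hn
    rw [this]
  constructor
  · intro i k hik
    apply main
    intro j hj
    obtain ⟨hkj, hwj⟩ := (wk_iff k (S j)).mp hj
    have hji : j ≠ i := by
      intro h; rw [h, hik] at hwj; exact hwj
    have hkey : (S j).key = (S i).key := by rw [hkj, hik]; rfl
    rcases hconf j i hji hkey (Or.inl hwj) with h | h
    · have h1 := Fin.lt_def.mp (hσ₁ _ _ h)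
      have h2 := Fin.lt_def.mp (hσ₂ _ _ h)
      omega
    · have h1 := Fin.lt_def.mp (hσ₁ _ _ h)
      have h2 := Fin.lt_def.mp (hσ₂ _ _ h)
      omega
  · have htake : ∀ (f : Fin m → Op K V), List.ofFn f = (List.ofFn f).take m := by
      intro f
      rw [List.take_of_length_le (by simp)]
    funext k
    rw [htake (S ∘ σ₁), htake (S ∘ σ₂)]
    exact main k m m (fun j _ => by simp [(σ₁.symm j).isLt, (σ₂.symm j).isLt])
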